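/- Let G be a stable weighted multigraph of genus g and let d be a semistable multidegree on G of total degree δ ≥ g. Then there exist effective multidegrees e and e′ on G such that d − e is a semistable multidegree of total degree g and d − e′ is a semistable multidegree of total degree g − 1. -/

import Mathlib

open Finset

/-- A multigraph on vertex type `V` with edge type `E`: each edge `e` joins the
(possibly equal) vertices `fst e` and `snd e` (loops and multiple edges allowed). -/
structure Multigraph (V E : Type) where
  fst : E → V
  snd : E → V

/-- An orientation of a multigraph: each edge gets a tail and a head, which are its
two endpoints (in one of the two possible orders). -/
structure GraphOrientation {V E : Type} (G : Multigraph V E) where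
  tail : E → V
  head : E → V
  compat : ∀ e, (tail e = G.fst e ∧ head e = G.snd e) ∨ (tail e = G.snd e ∧ head e = G.fst e)

variable {V E : Type} [Fintype V] [Fintype E] [DecidableEq V] [DecidableEq E]

namespace Multigraph

/-- `E(S)`: the set of edges with both endpoints in `S`. -/
def edgesIn (G : Multigraph V E) (S : Finset V) : Finset E :=
  univ.filter fun e => G.fst e ∈ S ∧ G.snd e ∈ S

/-- Membership in the cut of `S`: exactly one endpoint of `e` lies in `S`. -/
def InCut (G : Multigraph V E) (S : Finset V) (e : E) : Prop :=
  (G.fst e ∈ S ∧ G.snd e ∉ S) ∨ (G.fst e ∉ S ∧ G.snd e ∈ S)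

instance (G : Multigraph V E) (S : Finset V) : DecidablePred (G.InCut S) := fun e =>
  decidable_of_iff ((G.fst e ∈ S ∧ G.snd e ∉ S) ∨ (G.fst e ∉ S ∧ G.snd e ∈ S)) Iff.rfl

/-- `ε(S)`: the number of edges with exactly one endpoint in `S`. -/
def cutCard (G : Multigraph V E) (S : Finset V) : ℕ :=
  (univ.filter fun e => G.InCut S e).card

/-- The genus `g(S) = |E(S)| - |S| + 1 + Σ_{v ∈ S} g_v` of a subset of vertices,
for the vertex weight function `w`. -/
def genusOf (G : Multigraph V E) (w : V → ℕ) (S : Finset V) : ℤ :=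
  ((G.edgesIn S).card : ℤ) - S.card + 1 + ∑ v ∈ S, (w v : ℤ)

/-- The genus of the weighted multigraph. -/
def genus (G : Multigraph V E) (w : V → ℕ) : ℤ := G.genusOf w univ

/-- The valence of a vertex: the number of edge-ends at it (a loop counts twice). -/
def valence (G : Multigraph V E) (v : V) : ℕ :=
  (univ.filter fun e => G.fst e = v).card + (univ.filter fun e => G.snd e = v).card

/-- Adjacency via some edge. -/
def Adj (G : Multigraph V E) (a b : V) : Prop :=
  ∃ e, (G.fst e = a ∧ G.snd e = b) ∨ (G.fst e = b ∧ G.snd e = a)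

/-- The multigraph is connected: nonempty, and any two vertices are joined by a path. -/
def Connected (G : Multigraph V E) : Prop :=
  Nonempty V ∧ ∀ a b : V, Relation.ReflTransGen G.Adj a b

/-- Adjacency inside the induced subgraph on `S` (via an edge of `E(S)`). -/
def AdjOn (G : Multigraph V E) (S : Finset V) (a b : V) : Prop :=
  ∃ e, ((G.fst e = a ∧ G.snd e = b) ∨ (G.fst e = b ∧ G.snd e = a)) ∧
    G.fst e ∈ S ∧ G.snd e ∈ S

/-- The induced subgraph on `S` is connected. -/
def ConnectedOn (G : Multigraph V E) (S : Finset V) : Prop :=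
  ∀ a ∈ S, ∀ b ∈ S, Relation.ReflTransGen (G.AdjOn S) a b

/-- The weighted multigraph is stable: connected, of genus at least 2, and every
vertex of weight 0 has valence at least 3. -/
def IsStable (G : Multigraph V E) (w : V → ℕ) : Prop :=
  G.Connected ∧ 2 ≤ G.genus w ∧ ∀ v, w v = 0 → 3 ≤ G.valence v

/-- A multidegree `d : V → ℤ` of total degree `δ = ∑ v, d v` is semistable if for every
nonempty `S ⊆ V`:
`(2g-2)(g(S)-1) + (δ-g+1)(2g(S)-2+ε(S)) ≤ (2g-2) Σ_{v ∈ S} d v`. -/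
def Semistable (G : Multigraph V E) (w : V → ℕ) (d : V → ℤ) : Prop :=
  ∀ S : Finset V, S.Nonempty →
    (2 * G.genus w - 2) * (G.genusOf w S - 1) +
      ((∑ v, d v) - G.genus w + 1) * (2 * G.genusOf w S - 2 + (G.cutCard S : ℤ)) ≤
    (2 * G.genus w - 2) * ∑ v ∈ S, d v

/-- A multidegree is stable if it is semistable and the semistability inequality is
strict for every nonempty proper subset of vertices. -/
def StableDeg (G : Multigraph V E) (w : V → ℕ) (d : V → ℤ) : Prop :=
  G.Semistable w d ∧ ∀ S : Finset V, S.Nonempty → S ≠ univ →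
    (2 * G.genus w - 2) * (G.genusOf w S - 1) +
      ((∑ v, d v) - G.genus w + 1) * (2 * G.genusOf w S - 2 + (G.cutCard S : ℤ)) <
    (2 * G.genus w - 2) * ∑ v ∈ S, d v

/-- A multidegree is effective if it is nonnegative at every vertex. -/
def Effective (d : V → ℤ) : Prop := ∀ v, 0 ≤ d v

end Multigraph

namespace GraphOrientation

variable {G : Multigraph V E}

/-- The indegree of a vertex: the number of edges with head `v`. -/
def indeg (O : GraphOrientation G) (v : V) : ℕ :=
  (univ.filter fun e => O.head e = v).card

/-- The multidegree `d_O` associated to an orientation: `d_O(v) = g_v - 1 + indeg_O(v)`. -/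
def multidegree (O : GraphOrientation G) (w : V → ℕ) : V → ℤ :=
  fun v => (w v : ℤ) - 1 + (O.indeg v : ℤ)

/-- The edge `e₀` lies on a directed cycle of `O`: there are `k ≥ 1` distinct vertices
`vs` and distinct edges `es`, with `es i` directed from `vs i` to `vs (i+1)`,
one of the edges being `e₀`. -/
def EdgeInCycle (O : GraphOrientation G) (e₀ : E) : Prop :=
  ∃ (k : ℕ) (vs : Fin (k + 1) → V) (es : Fin (k + 1) → E),
    Function.Injective vs ∧ Function.Injective es ∧ (∃ i, es i = e₀) ∧
    ∀ i, O.tail (es i) = vs i ∧ O.head (es i) = vs (i + 1)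

/-- The orientation contains a directed cycle. -/
def HasDirectedCycle (O : GraphOrientation G) : Prop :=
  ∃ (k : ℕ) (vs : Fin (k + 1) → V) (es : Fin (k + 1) → E),
    Function.Injective vs ∧ Function.Injective es ∧
    ∀ i, O.tail (es i) = vs i ∧ O.head (es i) = vs (i + 1)

/-- The orientation is acyclic: it contains no directed cycle. -/
def Acyclic (O : GraphOrientation G) : Prop := ¬ O.HasDirectedCycle

/-- The orientation is totally cyclic: every edge lies on a directed cycle. -/
def TotallyCyclic (O : GraphOrientation G) : Prop := ∀ e, O.EdgeInCycle e

/-- The cut of `S` is directed towards `S`: every edge of the cut has its head in `S`. -/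
def CutTowards (O : GraphOrientation G) (S : Finset V) : Prop :=
  ∀ e, G.InCut S e → O.head e ∈ S

/-- The cut of `S` is directed away from `S`: every edge of the cut has its tail in `S`. -/
def CutAway (O : GraphOrientation G) (S : Finset V) : Prop :=
  ∀ e, G.InCut S e → O.tail e ∈ S

end GraphOrientation

namespace Multigraph

variable (G : Multigraph V E)

lemma aux_edgesIn_inter (S T : Finset V) :
    G.edgesIn (S ∩ T) = G.edgesIn S ∩ G.edgesIn T := by
  ext e
  simp only [edgesIn, Finset.mem_filter, Finset.mem_univ, true_and, Finset.mem_inter]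
  tauto

lemma aux_edgesIn_union_subset (S T : Finset V) :
    G.edgesIn S ∪ G.edgesIn T ⊆ G.edgesIn (S ∪ T) := by
  intro e he
  simp only [edgesIn, Finset.mem_union, Finset.mem_filter, Finset.mem_univ, true_and] at he ⊢
  tauto

lemma aux_card_edgesIn_supermod (S T : Finset V) :
    (G.edgesIn S).card + (G.edgesIn T).card
      ≤ (G.edgesIn (S ∪ T)).card + (G.edgesIn (S ∩ T)).card := by
  rw [← Finset.card_union_add_card_inter]
  have h1 : (G.edgesIn S ∪ G.edgesIn T).card ≤ (G.edgesIn (S ∪ T)).card :=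
    Finset.card_le_card (G.aux_edgesIn_union_subset S T)
  rw [← aux_edgesIn_inter]
  omega

lemma aux_genusOf_supermod (w : V → ℕ) (S T : Finset V) :
    G.genusOf w S + G.genusOf w T ≤ G.genusOf w (S ∪ T) + G.genusOf w (S ∩ T) := by
  have hcard := Finset.card_union_add_card_inter S T
  have hsum : ∑ v ∈ S ∪ T, (w v : ℤ) + ∑ v ∈ S ∩ T, (w v : ℤ)
      = ∑ v ∈ S, (w v : ℤ) + ∑ v ∈ T, (w v : ℤ) := Finset.sum_union_inter
  have hE := G.aux_card_edgesIn_supermod S T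
  have hc' : ((S ∪ T).card : ℤ) + ((S ∩ T).card : ℤ) = (S.card : ℤ) + (T.card : ℤ) := by
    exact_mod_cast hcard
  have hE' : ((G.edgesIn S).card : ℤ) + ((G.edgesIn T).card : ℤ)
      ≤ ((G.edgesIn (S ∪ T)).card : ℤ) + ((G.edgesIn (S ∩ T)).card : ℤ) := by
    exact_mod_cast hE
  unfold genusOf
  linarith

lemma aux_genusOf_union_disjoint (w : V → ℕ) (S T : Finset V) (hd : S ∩ T = ∅)
    (e₀ : E) (h1 : e₀ ∈ G.edgesIn (S ∪ T)) (h2 : e₀ ∉ G.edgesIn S) (h3 : e₀ ∉ G.edgesIn T) :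
    G.genusOf w S + G.genusOf w T ≤ G.genusOf w (S ∪ T) := by
  have hEdisj : G.edgesIn S ∩ G.edgesIn T = ∅ := by
    rw [← aux_edgesIn_inter, hd]
    ext e
    simp [edgesIn]
  have hsub : insert e₀ (G.edgesIn S ∪ G.edgesIn T) ⊆ G.edgesIn (S ∪ T) := by
    intro e he
    rcases Finset.mem_insert.1 he with rfl | he
    · exact h1
    · exact G.aux_edgesIn_union_subset S T he
  have hcard : (G.edgesIn S).card + (G.edgesIn T).card + 1 ≤ (G.edgesIn (S ∪ T)).card := by
    have hle := Finset.card_le_card hsub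
    rw [Finset.card_insert_of_notMem (by
      simp only [Finset.mem_union]
      tauto)] at hle
    have hu : (G.edgesIn S ∪ G.edgesIn T).card = (G.edgesIn S).card + (G.edgesIn T).card :=
      Finset.card_union_of_disjoint (Finset.disjoint_iff_inter_eq_empty.2 hEdisj)
    omega
  have hVcard : (S ∪ T).card = S.card + T.card := by
    have := Finset.card_union_add_card_inter S T
    rw [hd] at this
    simpa using this
  have hsum : ∑ v ∈ S ∪ T, (w v : ℤ) = ∑ v ∈ S, (w v : ℤ) + ∑ v ∈ T, (w v : ℤ) := by
    have h := Finset.sum_union_inter (s₁ := S) (s₂ := T) (f := fun v => (w v : ℤ))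
    rw [hd] at h
    simpa using h
  have hc' : ((S ∪ T).card : ℤ) = (S.card : ℤ) + (T.card : ℤ) := by exact_mod_cast hVcard
  have hE' : ((G.edgesIn S).card : ℤ) + ((G.edgesIn T).card : ℤ) + 1
      ≤ ((G.edgesIn (S ∪ T)).card : ℤ) := by exact_mod_cast hcard
  unfold genusOf
  linarith

lemma aux_sum_valence (S : Finset V) :
    ∑ v ∈ S, G.valence v = 2 * (G.edgesIn S).card + G.cutCard S := by
  have hfib : ∀ (f : E → V), (univ.filter fun e => f e ∈ S).card
      = ∑ v ∈ S, (univ.filter fun e => f e = v).card := by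
    intro f
    rw [Finset.card_eq_sum_card_fiberwise (s := univ.filter fun e => f e ∈ S) (f := f) (t := S)
      (fun e he => (Finset.mem_filter.1 he).2)]
    refine Finset.sum_congr rfl fun v hv => ?_
    congr 1
    ext e
    simp only [Finset.mem_filter, Finset.mem_univ, true_and]
    constructor
    · exact fun h => h.2
    · intro h
      exact ⟨by rw [h]; exact hv, h⟩
  have hkey : (univ.filter fun e => G.fst e ∈ S).card + (univ.filter fun e => G.snd e ∈ S).card
      = 2 * (G.edgesIn S).card + G.cutCard S := by
    unfold edgesIn cutCard
    rw [Finset.card_filter, Finset.card_filter, Finset.card_filter, Finset.card_filter,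
      ← Finset.sum_add_distrib, Finset.mul_sum, ← Finset.sum_add_distrib]
    refine Finset.sum_congr rfl fun e _ => ?_
    by_cases h1 : G.fst e ∈ S <;> by_cases h2 : G.snd e ∈ S <;>
      simp [Multigraph.InCut, h1, h2]
  calc ∑ v ∈ S, G.valence v
      = (univ.filter fun e => G.fst e ∈ S).card + (univ.filter fun e => G.snd e ∈ S).card := by
        unfold valence
        rw [Finset.sum_add_distrib, hfib G.fst, hfib G.snd]
    _ = 2 * (G.edgesIn S).card + G.cutCard S := hkey

lemma aux_canSum (w : V → ℕ) (S : Finset V) :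
    2 * G.genusOf w S - 2 + (G.cutCard S : ℤ)
      = ∑ v ∈ S, ((G.valence v : ℤ) + 2 * (w v : ℤ) - 2) := by
  have h := G.aux_sum_valence S
  have h' : (∑ v ∈ S, (G.valence v : ℤ))
      = 2 * ((G.edgesIn S).card : ℤ) + (G.cutCard S : ℤ) := by exact_mod_cast h
  have hr : ∑ v ∈ S, ((G.valence v : ℤ) + 2 * (w v : ℤ) - 2)
      = (∑ v ∈ S, (G.valence v : ℤ)) + 2 * (∑ v ∈ S, (w v : ℤ)) - 2 * (S.card : ℤ) := by
    rw [Finset.sum_sub_distrib, Finset.sum_add_distrib, ← Finset.mul_sum, Finset.sum_const]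
    push_cast
    ring
  rw [hr, h']
  unfold genusOf
  ring

lemma aux_exists_cut_edge (hconn : G.Connected) {S : Finset V}
    (hne : S.Nonempty) (hproper : S ≠ univ) : ∃ e, G.InCut S e := by
  obtain ⟨a, ha⟩ := hne
  obtain ⟨b, hb⟩ : ∃ b, b ∉ S := by
    by_contra h
    push_neg at h
    exact hproper (Finset.eq_univ_iff_forall.2 h)
  have key : ∀ x y : V, Relation.ReflTransGen G.Adj x y → x ∈ S → y ∉ S → ∃ e, G.InCut S e := by
    intro x y h
    induction h with
    | refl => exact fun h1 h2 => absurd h1 h2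
    | @tail m c _ hmc ih =>
      intro hx hc
      by_cases hm : m ∈ S
      · obtain ⟨e, he⟩ := hmc
        rcases he with ⟨h1, h2⟩ | ⟨h1, h2⟩
        · exact ⟨e, Or.inl ⟨by rw [h1]; exact hm, by rw [h2]; exact hc⟩⟩
        · exact ⟨e, Or.inr ⟨by rw [h1]; exact hc, by rw [h2]; exact hm⟩⟩
      · exact ih hx hm
  exact key a b (hconn.2 a b) ha hb

lemma aux_one_le_canDeg (w : V → ℕ) (hG : G.IsStable w) (hcard : 1 < Fintype.card V) (v : V) :
    (1 : ℤ) ≤ (G.valence v : ℤ) + 2 * (w v : ℤ) - 2 := by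
  have hval : 1 ≤ G.valence v := by
    have hproper : ({v} : Finset V) ≠ univ := by
      intro h
      have : Fintype.card V = 1 := by
        rw [← Finset.card_univ, ← h, Finset.card_singleton]
      omega
    obtain ⟨e, he⟩ := G.aux_exists_cut_edge hG.1 (Finset.singleton_nonempty v) hproper
    unfold valence
    rcases he with ⟨h1, _⟩ | ⟨_, h2⟩
    · have hm : e ∈ univ.filter fun e => G.fst e = v := by
        simp only [Finset.mem_filter, Finset.mem_univ, true_and]
        simpa using h1
      have := Finset.card_pos.2 ⟨e, hm⟩
      omega
    · have hm : e ∈ univ.filter fun e => G.snd e = v := by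
        simp only [Finset.mem_filter, Finset.mem_univ, true_and]
        simpa using h2
      have := Finset.card_pos.2 ⟨e, hm⟩
      omega
  have hval' : (1 : ℤ) ≤ (G.valence v : ℤ) := by exact_mod_cast hval
  rcases Nat.eq_zero_or_pos (w v) with h | h
  · have h3 : 3 ≤ G.valence v := hG.2.2 v h
    have h3' : (3 : ℤ) ≤ (G.valence v : ℤ) := by exact_mod_cast h3
    rw [h]
    push_cast
    linarith
  · have h1' : (1 : ℤ) ≤ (w v : ℤ) := by exact_mod_cast h
    linarith

lemma aux_cutCard_univ : G.cutCard (univ : Finset V) = 0 := by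
  unfold cutCard
  simp [Multigraph.InCut, Finset.filter_eq_empty_iff]

/-- For a stable graph and a proper nonempty `S`, `1 ≤ c(S) ≤ 2g - 3` where
`c(S) = 2 g(S) - 2 + ε(S)`. -/
lemma aux_can_bounds (w : V → ℕ) (hG : G.IsStable w) {S : Finset V}
    (h1 : S.Nonempty) (h2 : S ≠ univ) :
    1 ≤ 2 * G.genusOf w S - 2 + (G.cutCard S : ℤ) ∧
      2 * G.genusOf w S - 2 + (G.cutCard S : ℤ) ≤ 2 * G.genus w - 3 := by
  obtain ⟨a, ha⟩ := h1
  obtain ⟨b, hb⟩ : ∃ b, b ∉ S := by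
    by_contra h
    push_neg at h
    exact h2 (Finset.eq_univ_iff_forall.2 h)
  have hntriv : 1 < Fintype.card V :=
    Fintype.one_lt_card_iff_nontrivial.2 ⟨⟨a, b, fun h => hb (h ▸ ha)⟩⟩
  have hcan : ∀ v : V, (1 : ℤ) ≤ (G.valence v : ℤ) + 2 * (w v : ℤ) - 2 :=
    fun v => G.aux_one_le_canDeg w hG hntriv v
  have hS := G.aux_canSum w S
  have hScompl := G.aux_canSum w Sᶜ
  have huniv := G.aux_canSum w (univ : Finset V)
  have hsplit := Finset.sum_add_sum_compl S (fun v => (G.valence v : ℤ) + 2 * (w v : ℤ) - 2)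
  have hlowS : (S.card : ℤ) ≤ ∑ v ∈ S, ((G.valence v : ℤ) + 2 * (w v : ℤ) - 2) := by
    have := Finset.sum_le_sum (s := S) (f := fun _ => (1 : ℤ))
      (g := fun v => (G.valence v : ℤ) + 2 * (w v : ℤ) - 2) (fun i _ => hcan i)
    simpa using this
  have hlowC : (Sᶜ.card : ℤ) ≤ ∑ v ∈ Sᶜ, ((G.valence v : ℤ) + 2 * (w v : ℤ) - 2) := by
    have := Finset.sum_le_sum (s := Sᶜ) (f := fun _ => (1 : ℤ))
      (g := fun v => (G.valence v : ℤ) + 2 * (w v : ℤ) - 2) (fun i _ => hcan i)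
    simpa using this
  have hcardS : 1 ≤ S.card := Finset.card_pos.2 ⟨a, ha⟩
  have hcardC : 1 ≤ Sᶜ.card := Finset.card_pos.2 ⟨b, Finset.mem_compl.2 hb⟩
  have hcardS' : (1 : ℤ) ≤ (S.card : ℤ) := by exact_mod_cast hcardS
  have hcardC' : (1 : ℤ) ≤ (Sᶜ.card : ℤ) := by exact_mod_cast hcardC
  have hcut0 : (G.cutCard (univ : Finset V) : ℤ) = 0 := by
    rw [G.aux_cutCard_univ]
    rfl
  have hgen : G.genus w = G.genusOf w univ := rfl
  constructor
  · linarith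
  · rw [hgen]
    linarith

/-- Step lemma: if `Σ_S d ≥ g(S)` for all proper nonempty `S` and `Σ d > g`, then some
vertex can be decremented keeping all these inequalities. -/
lemma aux_step (w : V → ℕ) (hG : G.IsStable w) (d : V → ℤ)
    (hP : ∀ S : Finset V, S.Nonempty → S ≠ univ → G.genusOf w S ≤ ∑ v ∈ S, d v)
    (hbig : G.genus w < ∑ v, d v) :
    ∃ x : V, ∀ S : Finset V, S.Nonempty → S ≠ univ → x ∈ S →
      G.genusOf w S + 1 ≤ ∑ v ∈ S, d v := by
  by_contra hcon
  push_neg at hcon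
  have hV : Nonempty V := hG.1.1
  classical
  set 𝒯 : Finset (Finset V) :=
    univ.filter (fun S => S.Nonempty ∧ S ≠ univ ∧ ∑ v ∈ S, d v ≤ G.genusOf w S) with h𝒯
  have hmem : ∀ x : V, ∃ S ∈ 𝒯, x ∈ S := by
    intro x
    obtain ⟨S, h1, h2, h3, h4⟩ := hcon x
    exact ⟨S, Finset.mem_filter.2 ⟨Finset.mem_univ _, h1, h2, by linarith⟩, h3⟩
  obtain ⟨x0⟩ := hV
  obtain ⟨S0, hS0, _⟩ := hmem x0
  obtain ⟨M, hM𝒯, hMmax⟩ := Finset.exists_max_image 𝒯 (fun S => S.card) ⟨S0, hS0⟩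
  obtain ⟨hMne, hMproper, hMtight⟩ := (Finset.mem_filter.1 hM𝒯).2
  obtain ⟨e₀, he₀⟩ := G.aux_exists_cut_edge hG.1 hMne hMproper
  obtain ⟨a, b, haM, hbM, hab⟩ : ∃ a b, a ∈ M ∧ b ∉ M ∧
      ((G.fst e₀ = a ∧ G.snd e₀ = b) ∨ (G.fst e₀ = b ∧ G.snd e₀ = a)) := by
    rcases he₀ with ⟨h1, h2⟩ | ⟨h1, h2⟩
    · exact ⟨G.fst e₀, G.snd e₀, h1, h2, Or.inl ⟨rfl, rfl⟩⟩
    · exact ⟨G.snd e₀, G.fst e₀, h2, h1, Or.inr ⟨rfl, rfl⟩⟩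
  obtain ⟨T, hT𝒯, hbT⟩ := hmem b
  obtain ⟨hTne, hTproper, hTtight⟩ := (Finset.mem_filter.1 hT𝒯).2
  have hsum_ui : ∑ v ∈ M ∪ T, d v + ∑ v ∈ M ∩ T, d v = ∑ v ∈ M, d v + ∑ v ∈ T, d v :=
    Finset.sum_union_inter
  have hMU : M ⊆ M ∪ T := Finset.subset_union_left
  have hbU : b ∈ M ∪ T := Finset.mem_union_right _ hbT
  have hcardlt : M.card < (M ∪ T).card :=
    Finset.card_lt_card ⟨hMU, fun h => hbM (h hbU)⟩
  have hUnotin : M ∪ T ∉ 𝒯 := fun h => absurd (hMmax _ h) (by omega)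
  have hUne : (M ∪ T).Nonempty := hMne.mono hMU
  have hgen : G.genus w = G.genusOf w univ := rfl
  have hUgood : M ∪ T = univ ∨ G.genusOf w (M ∪ T) < ∑ v ∈ M ∪ T, d v := by
    by_cases h : M ∪ T = univ
    · exact Or.inl h
    · right
      by_contra hle
      push_neg at hle
      exact hUnotin (Finset.mem_filter.2 ⟨Finset.mem_univ _, hUne, h, hle⟩)
  by_cases hI : (M ∩ T).Nonempty
  · have hsup := G.aux_genusOf_supermod w M T
    have hIproper : M ∩ T ≠ univ := by
      intro h
      exact hbM (Finset.inter_subset_left (h ▸ Finset.mem_univ b))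
    have hIlow := hP _ hI hIproper
    rcases hUgood with h | h
    · rw [h] at hsum_ui hsup
      rw [← hgen] at hsup
      linarith
    · linarith
  · have hIempty : M ∩ T = ∅ := Finset.not_nonempty_iff_eq_empty.1 hI
    have haT : a ∉ T := by
      intro h
      exact hI ⟨a, Finset.mem_inter.2 ⟨haM, h⟩⟩
    have he₀U : e₀ ∈ G.edgesIn (M ∪ T) := by
      simp only [edgesIn, Finset.mem_filter, Finset.mem_univ, true_and]
      rcases hab with ⟨h1, h2⟩ | ⟨h1, h2⟩
      · exact ⟨by rw [h1]; exact hMU haM, by rw [h2]; exact hbU⟩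
      · exact ⟨by rw [h1]; exact hbU, by rw [h2]; exact hMU haM⟩
    have he₀M : e₀ ∉ G.edgesIn M := by
      simp only [edgesIn, Finset.mem_filter, Finset.mem_univ, true_and]
      rcases hab with ⟨h1, h2⟩ | ⟨h1, h2⟩
      · rw [h1, h2]; exact fun h => hbM h.2
      · rw [h1, h2]; exact fun h => hbM h.1
    have he₀T : e₀ ∉ G.edgesIn T := by
      simp only [edgesIn, Finset.mem_filter, Finset.mem_univ, true_and]
      rcases hab with ⟨h1, h2⟩ | ⟨h1, h2⟩
      · rw [h1, h2]; exact fun h => haT h.1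
      · rw [h1, h2]; exact fun h => haT h.2
    have hsup := G.aux_genusOf_union_disjoint w M T hIempty e₀ he₀U he₀M he₀T
    have hsum' : ∑ v ∈ M ∪ T, d v = ∑ v ∈ M, d v + ∑ v ∈ T, d v := by
      rw [← hsum_ui, hIempty]
      simp
    rcases hUgood with h | h
    · rw [h] at hsum' hsup
      rw [← hgen] at hsup
      linarith
    · linarith

/-- Reduction: decrease the total degree down to `g` keeping the inequalities. -/
lemma aux_reduce (w : V → ℕ) (hG : G.IsStable w) :
    ∀ n : ℕ, ∀ d : V → ℤ,
      (∀ S : Finset V, S.Nonempty → S ≠ univ → G.genusOf w S ≤ ∑ v ∈ S, d v) →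
      ∑ v, d v = G.genus w + n →
      ∃ d'' : V → ℤ, (∀ v, d'' v ≤ d v) ∧
        (∀ S : Finset V, S.Nonempty → S ≠ univ → G.genusOf w S ≤ ∑ v ∈ S, d'' v) ∧
        ∑ v, d'' v = G.genus w := by
  intro n
  induction n with
  | zero =>
    intro d hP hs
    exact ⟨d, fun v => le_refl _, hP, by simpa using hs⟩
  | succ n ih =>
    intro d hP hs
    have hbig : G.genus w < ∑ v, d v := by
      rw [hs]
      have : (0 : ℤ) ≤ (n : ℤ) := Int.natCast_nonneg n
      push_cast
      linarith
    obtain ⟨x, hx⟩ := G.aux_step w hG d hP hbig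
    set d1 : V → ℤ := Function.update d x (d x - 1) with hd1
    have hsum_update : ∀ (S : Finset V), x ∈ S → ∑ v ∈ S, d1 v = ∑ v ∈ S, d v - 1 := by
      intro S hxS
      rw [hd1, Finset.sum_update_of_mem hxS, Finset.sdiff_singleton_eq_erase]
      have := Finset.sum_erase_add S d hxS
      linarith
    have hsum1 : ∑ v, d1 v = ∑ v, d v - 1 := hsum_update univ (Finset.mem_univ x)
    have hP1 : ∀ S : Finset V, S.Nonempty → S ≠ univ → G.genusOf w S ≤ ∑ v ∈ S, d1 v := by
      intro S h1 h2
      by_cases hxS : x ∈ S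
      · have hSsum := hsum_update S hxS
        have := hx S h1 h2 hxS
        linarith
      · have hSsum : ∑ v ∈ S, d1 v = ∑ v ∈ S, d v :=
          Finset.sum_congr rfl fun v hv => Function.update_of_ne (fun h : v = x => hxS (by rw [← h]; exact hv)) _ _
        have := hP S h1 h2
        linarith
    have hs1 : ∑ v, d1 v = G.genus w + n := by
      rw [hsum1, hs]
      push_cast
      ring
    obtain ⟨d'', h1, h2, h3⟩ := ih d1 hP1 hs1
    refine ⟨d'', fun v => (h1 v).trans ?_, h2, h3⟩
    by_cases h : v = x
    · subst h
      rw [hd1, Function.update_self]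
      linarith
    · rw [hd1, Function.update_of_ne h]

end Multigraph

/-- If `d` is a semistable multidegree of total degree `δ ≥ g` on a stable
weighted multigraph, then there are effective multidegrees `e`, `e'` such that `d - e`
is semistable of total degree `g` and `d - e'` is semistable of total degree `g - 1`. -/
theorem semistable_minus_effective
    (G : Multigraph V E) (w : V → ℕ) (hG : G.IsStable w) (d : V → ℤ)
    (hss : G.Semistable w d) (hδ : G.genus w ≤ ∑ v, d v) :
    ∃ e e' : V → ℤ, Multigraph.Effective e ∧ Multigraph.Effective e' ∧
      G.Semistable w (fun v => d v - e v) ∧ (∑ v, (d v - e v)) = G.genus w ∧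
      G.Semistable w (fun v => d v - e' v) ∧ (∑ v, (d v - e' v)) = G.genus w - 1 := by
  classical
  have hgen : G.genus w = G.genusOf w univ := rfl
  have hg2 : 2 ≤ G.genus w := hG.2.1
  -- Step 1: `Σ_S d ≥ g(S)` for every proper nonempty `S`.
  have hP : ∀ S : Finset V, S.Nonempty → S ≠ univ → G.genusOf w S ≤ ∑ v ∈ S, d v := by
    intro S h1 h2
    have hss' := hss S h1
    have hb := G.aux_can_bounds w hG h1 h2
    have hm : 1 ≤ (∑ v, d v) - G.genus w + 1 := by linarith
    by_contra hcon
    push_neg at hcon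
    have h1' : ∑ v ∈ S, d v ≤ G.genusOf w S - 1 := by linarith
    have hmc : 1 ≤ ((∑ v, d v) - G.genus w + 1) * (2 * G.genusOf w S - 2 + (G.cutCard S : ℤ)) := by
      nlinarith [hb.1]
    have hmul := mul_le_mul_of_nonneg_left h1' (by linarith : (0 : ℤ) ≤ 2 * G.genus w - 2)
    nlinarith
  -- Step 2: reduce total degree to `g`.
  have hn : ((((∑ v, d v) - G.genus w).toNat : ℤ)) = (∑ v, d v) - G.genus w :=
    Int.toNat_of_nonneg (by linarith)
  obtain ⟨d'', hle, hP'', hsum''⟩ := G.aux_reduce w hG ((∑ v, d v) - G.genus w).toNat d hP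
    (by rw [hn]; ring)
  -- Semistability of `d''` (total degree `g`).
  have hss2 : G.Semistable w d'' := by
    intro S h1
    rw [hsum'']
    by_cases h2 : S = univ
    · subst h2
      rw [← hgen, hsum'']
      have hc0 : (G.cutCard (univ : Finset V) : ℤ) = 0 := by
        rw [G.aux_cutCard_univ]; rfl
      rw [hc0]
      ring_nf
      linarith
    · have hb := G.aux_can_bounds w hG h1 h2
      have hPS := hP'' S h1 h2
      have hmul := mul_le_mul_of_nonneg_left hPS (by linarith : (0 : ℤ) ≤ 2 * G.genus w - 2)
      linarith
  -- The degree `g - 1` companion: subtract 1 at an arbitrary vertex.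
  have hV : Nonempty V := hG.1.1
  obtain ⟨v₀⟩ := hV
  set d3 : V → ℤ := fun v => d'' v - (if v = v₀ then 1 else 0) with hd3
  have hsum3 : ∑ v, d3 v = G.genus w - 1 := by
    rw [hd3]
    rw [Finset.sum_sub_distrib, hsum'']
    have : (∑ v : V, if v = v₀ then (1 : ℤ) else 0) = 1 := by
      rw [Finset.sum_ite_eq' univ v₀ (fun _ => (1 : ℤ))]
      simp
    rw [this]
  have hsum3S : ∀ S : Finset V, ∑ v ∈ S, d3 v = ∑ v ∈ S, d'' v - (if v₀ ∈ S then 1 else 0) := by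
    intro S
    rw [hd3, Finset.sum_sub_distrib, Finset.sum_ite_eq' S v₀ (fun _ => (1 : ℤ))]
  have hss3 : G.Semistable w d3 := by
    intro S h1
    rw [hsum3]
    rw [show G.genus w - 1 - G.genus w + 1 = 0 by ring, zero_mul, add_zero]
    by_cases h2 : S = univ
    · subst h2
      rw [← hgen, hsum3]
    · have hPS := hP'' S h1 h2
      have hS3 := hsum3S S
      have hd3le : G.genusOf w S - 1 ≤ ∑ v ∈ S, d3 v := by
        rw [hS3]
        by_cases h : v₀ ∈ S <;> simp [h] <;> try linarith
      have hmul := mul_le_mul_of_nonneg_left hd3le (by linarith : (0 : ℤ) ≤ 2 * G.genus w - 2)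
      linarith
  -- Assemble.
  refine ⟨fun v => d v - d'' v, fun v => d v - d3 v,
    fun v => by show (0 : ℤ) ≤ d v - d'' v; linarith [hle v],
    fun v => ?_, ?_, ?_, ?_, ?_⟩
  · show (0 : ℤ) ≤ d v - d3 v
    rw [hd3]
    by_cases h : v = v₀ <;> simp [h] <;> linarith [hle v, hle v₀]
  · have heq : (fun v => d v - (d v - d'' v)) = d'' := by funext v; ring
    rw [heq]
    exact hss2
  · have heq : (fun v => d v - (d v - d'' v)) = d'' := by funext v; ring
    calc ∑ v, (d v - (d v - d'' v)) = ∑ v, d'' v := by rw [show (fun v => d v - (d v - d'' v)) = d'' from heq]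
      _ = G.genus w := hsum''
  · have heq : (fun v => d v - (d v - d3 v)) = d3 := by funext v; ring
    rw [heq]
    exact hss3
  · have heq : (fun v => d v - (d v - d3 v)) = d3 := by funext v; ring
    calc ∑ v, (d v - (d v - d3 v)) = ∑ v, d3 v := by rw [show (fun v => d v - (d v - d3 v)) = d3 from heq]
      _ = G.genus w - 1 := hsum3
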